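/- If E and G are subequations with ∂E ⊆ ∂G (inclusion of topological boundaries), then E = G. -/

import Mathlib

open Topology Pointwise

abbrev SymMat (n : ℕ) : Type := selfAdjoint (Matrix (Fin n) (Fin n) ℝ)

def PSD (n : ℕ) : Set (SymMat n) := {A | (A : Matrix (Fin n) (Fin n) ℝ).PosSemidef}

def dual {n : ℕ} (F : Set (SymMat n)) : Set (SymMat n) := {A | -A ∉ interior F}

namespace Stmt13Aux

variable {n : ℕ}

noncomputable def absSum (M : Matrix (Fin n) (Fin n) ℝ) : ℝ := ∑ i, ∑ j, |M i j|

lemma absSum_nonneg (M : Matrix (Fin n) (Fin n) ℝ) : 0 ≤ absSum M :=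
  Finset.sum_nonneg fun i _ => Finset.sum_nonneg fun j _ => abs_nonneg _

lemma quad_eq (M : Matrix (Fin n) (Fin n) ℝ) (x : Fin n → ℝ) :
    dotProduct x (M.mulVec x) = ∑ i, ∑ j, x i * M i j * x j := by
  simp [dotProduct, Matrix.mulVec, Finset.mul_sum, mul_comm, mul_left_comm, mul_assoc]

lemma sq_le_sum (x : Fin n → ℝ) (i : Fin n) : x i ^ 2 ≤ ∑ k, x k ^ 2 :=
  Finset.single_le_sum (fun k _ => sq_nonneg (x k)) (Finset.mem_univ i)

lemma quad_abs_le (M : Matrix (Fin n) (Fin n) ℝ) (x : Fin n → ℝ) :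
    |dotProduct x (M.mulVec x)| ≤ absSum M * (∑ k, x k ^ 2) := by
  rw [quad_eq, absSum, Finset.sum_mul]
  refine (Finset.abs_sum_le_sum_abs _ _).trans (Finset.sum_le_sum fun i _ => ?_)
  rw [Finset.sum_mul]
  refine (Finset.abs_sum_le_sum_abs _ _).trans (Finset.sum_le_sum fun j _ => ?_)
  have h1 : |x i * M i j * x j| = |M i j| * (|x i| * |x j|) := by
    rw [abs_mul, abs_mul]; ring
  rw [h1]
  refine mul_le_mul_of_nonneg_left ?_ (abs_nonneg _)
  have h2 : |x i| * |x j| ≤ (x i ^ 2 + x j ^ 2) / 2 := by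
    nlinarith [sq_nonneg (|x i| - |x j|), sq_abs (x i), sq_abs (x j)]
  have := sq_le_sum x i; have := sq_le_sum x j
  linarith

lemma quad_smul_one (t : ℝ) (x : Fin n → ℝ) :
    dotProduct x ((t • (1:Matrix (Fin n) (Fin n) ℝ)).mulVec x) = t * ∑ k, x k ^ 2 := by
  rw [Matrix.smul_mulVec, Matrix.one_mulVec, dotProduct_smul]
  simp [dotProduct, sq, Finset.mul_sum]

lemma isHermitian_smul_one (t : ℝ) : ((t • (1:Matrix (Fin n) (Fin n) ℝ))).IsHermitian := by
  simp [Matrix.IsHermitian]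

lemma sum_sq_nonneg (x : Fin n → ℝ) : 0 ≤ ∑ k, x k ^ 2 :=
  Finset.sum_nonneg fun k _ => sq_nonneg _

lemma sum_sq_pos (x : Fin n → ℝ) (hx : x ≠ 0) : 0 < ∑ k, x k ^ 2 := by
  rcases (sum_sq_nonneg x).lt_or_eq with h | h
  · exact h
  · exfalso; apply hx; funext k
    have := (Finset.sum_eq_zero_iff_of_nonneg (fun k _ => sq_nonneg (x k))).mp h.symm k
      (Finset.mem_univ k)
    simpa using pow_eq_zero_iff (n := 2) (by norm_num) |>.mp this

lemma add_smul_one_posSemidef {M : Matrix (Fin n) (Fin n) ℝ} (hM : M.IsHermitian) {t : ℝ}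
    (ht : absSum M ≤ t) : (M + t • 1).PosSemidef := by
  refine Matrix.posSemidef_iff_dotProduct_mulVec.mpr ⟨hM.add (isHermitian_smul_one t), fun x => ?_⟩
  simp only [star_trivial, Matrix.add_mulVec, dotProduct_add, quad_smul_one]
  have h1 := (abs_le.mp (quad_abs_le M x)).1
  have h2 : absSum M * (∑ k, x k ^ 2) ≤ t * ∑ k, x k ^ 2 :=
    mul_le_mul_of_nonneg_right ht (sum_sq_nonneg x)
  linarith

lemma add_smul_one_posDef {M : Matrix (Fin n) (Fin n) ℝ} (hM : M.IsHermitian) {t : ℝ}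
    (ht : absSum M < t) : (M + t • 1).PosDef := by
  refine Matrix.posDef_iff_dotProduct_mulVec.mpr ⟨hM.add (isHermitian_smul_one t), fun x hx => ?_⟩
  simp only [star_trivial, Matrix.add_mulVec, dotProduct_add, quad_smul_one]
  have h1 := (abs_le.mp (quad_abs_le M x)).1
  have hs := sum_sq_pos x hx
  have h2 : absSum M * (∑ k, x k ^ 2) < t * ∑ k, x k ^ 2 := mul_lt_mul_of_pos_right ht hs
  linarith

lemma smul_one_posSemidef {t : ℝ} (ht : 0 ≤ t) :
    ((t • (1:Matrix (Fin n) (Fin n) ℝ))).PosSemidef := by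
  have h := add_smul_one_posSemidef (M := (0 : Matrix (Fin n) (Fin n) ℝ))
    (Matrix.isHermitian_zero) (t := t) (by simp [absSum]; exact ht)
  simpa using h

lemma smul_one_posDef {t : ℝ} (ht : 0 < t) :
    ((t • (1:Matrix (Fin n) (Fin n) ℝ))).PosDef := by
  have h := add_smul_one_posDef (M := (0 : Matrix (Fin n) (Fin n) ℝ))
    (Matrix.isHermitian_zero) (t := t) (by simp [absSum]; exact ht)
  simpa using h

lemma quad_continuous (M : Matrix (Fin n) (Fin n) ℝ) :
    Continuous fun x : Fin n → ℝ => dotProduct x (M.mulVec x) := by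
  simp only [dotProduct, Matrix.mulVec]
  exact continuous_finset_sum _ fun i _ =>
    (continuous_apply i).mul (continuous_finset_sum _ fun j _ =>
      (continuous_const.mul (continuous_apply j)))

lemma quad_smul (M : Matrix (Fin n) (Fin n) ℝ) (a : ℝ) (x : Fin n → ℝ) :
    dotProduct (a • x) (M.mulVec (a • x)) = a^2 * dotProduct x (M.mulVec x) := by
  rw [Matrix.mulVec_smul, smul_dotProduct, dotProduct_smul]
  simp [sq, mul_assoc]

lemma coercive {M : Matrix (Fin n) (Fin n) ℝ} (hn : 0 < n) (hM : M.PosDef) :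
    ∃ c > 0, ∀ x : Fin n → ℝ, c * (∑ k, x k ^ 2) ≤ dotProduct x (M.mulVec x) := by
  set f : (Fin n → ℝ) → ℝ := fun x => dotProduct x (M.mulVec x) with hf
  set K : Set (Fin n → ℝ) := {x | ∑ k, x k ^ 2 = 1} with hK
  have hKcl : IsClosed K :=
    isClosed_eq (continuous_finset_sum _ fun k _ => (continuous_apply k).pow 2) continuous_const
  have hKsub : K ⊆ Metric.closedBall 0 1 := by
    intro x hx
    rw [Metric.mem_closedBall, dist_zero_right, pi_norm_le_iff_of_nonneg zero_le_one]
    intro k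
    rw [Real.norm_eq_abs, abs_le]
    have h1 : x k ^ 2 ≤ 1 := by
      rw [← hx]; exact sq_le_sum x k
    constructor <;> nlinarith
  have hKcompact : IsCompact K :=
    (isCompact_closedBall (0 : Fin n → ℝ) 1).of_isClosed_subset hKcl hKsub
  have hKne : K.Nonempty := by
    refine ⟨Pi.single ⟨0, hn⟩ 1, ?_⟩
    simp [hK, Pi.single_apply, sq]
  obtain ⟨x₀, hx₀K, hmin⟩ := hKcompact.exists_isMinOn hKne (quad_continuous M).continuousOn
  have hx₀ne : x₀ ≠ 0 := by
    intro h; rw [h] at hx₀K; simp [hK] at hx₀K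
  have hc : 0 < f x₀ := by
    have := (Matrix.posDef_iff_dotProduct_mulVec.mp hM).2 hx₀ne
    simpa using this
  refine ⟨f x₀, hc, fun x => ?_⟩
  by_cases hx : x = 0
  · simp [hx, hf, f]
  · have hs : 0 < ∑ k, x k ^ 2 := sum_sq_pos x hx
    set s := ∑ k, x k ^ 2
    set a := (Real.sqrt s)⁻¹ with ha
    have hsq : a ^ 2 = s⁻¹ := by
      rw [ha, ← Real.sqrt_inv, Real.sq_sqrt (inv_nonneg.mpr hs.le)]
    have hy : (a • x) ∈ K := by
      simp only [hK, Set.mem_setOf_eq, Pi.smul_apply, smul_eq_mul, mul_pow]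
      rw [← Finset.mul_sum, hsq]
      exact inv_mul_cancel₀ hs.ne'
    have hle : f x₀ ≤ a^2 * f x := by
      have h := hmin hy
      simp only [Set.mem_setOf_eq] at h
      calc f x₀ ≤ dotProduct (a • x) (M.mulVec (a • x)) := h
        _ = a ^ 2 * f x := quad_smul M a x
    rw [hsq] at hle
    have h2 := mul_le_mul_of_nonneg_right hle hs.le
    calc f x₀ * s ≤ s⁻¹ * f x * s := h2
      _ = f x := by field_simp

/-- the scalar matrix t•I as an element of SymMat n -/
noncomputable def smI (n : ℕ) (t : ℝ) : SymMat n :=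
  ⟨t • 1, IsSelfAdjoint.smul (star_trivial t) (IsSelfAdjoint.one _)⟩

@[simp] lemma smI_val (t : ℝ) : (smI n t : Matrix (Fin n) (Fin n) ℝ) = t • 1 := rfl

lemma smI_mem_PSD {t : ℝ} (ht : 0 ≤ t) : smI n t ∈ PSD n := smul_one_posSemidef ht

lemma symmat_herm (x : SymMat n) : (x : Matrix (Fin n) (Fin n) ℝ).IsHermitian := x.prop

lemma sub_herm (B A : SymMat n) :
    ((B : Matrix (Fin n) (Fin n) ℝ) - A).IsHermitian := by
  have := symmat_herm (B - A)
  rwa [AddSubgroup.coe_sub] at this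

/-- key interior lemma: adding a positive definite matrix lands in the interior -/
lemma mem_interior_of_posDef (hn : 0 < n) (F : Set (SymMat n)) (hF : F + PSD n ⊆ F)
    {A S : SymMat n} (hA : A ∈ F) (hS : (S : Matrix (Fin n) (Fin n) ℝ).PosDef) :
    A + S ∈ interior F := by
  obtain ⟨c, hc, hcoer⟩ := coercive hn hS
  set ε := c / (n^2 : ℝ) with hε
  have hnpos : (0:ℝ) < (n:ℝ)^2 := by positivity
  have hεpos : 0 < ε := div_pos hc hnpos
  set U : Set (SymMat n) :=
    {x | ∀ i j, |((x : Matrix (Fin n) (Fin n) ℝ) - A - S) i j| < ε} with hU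
  have hUopen : IsOpen U := by
    have : U = Subtype.val ⁻¹'
        (⋂ i, ⋂ j, {M : Matrix (Fin n) (Fin n) ℝ | |(M - (A:Matrix (Fin n) (Fin n) ℝ) - S) i j| < ε}) := by
      ext x; simp [hU]
    rw [this]
    refine IsOpen.preimage continuous_subtype_val ?_
    refine isOpen_iInter_of_finite fun i => isOpen_iInter_of_finite fun j => ?_
    have h1 : Continuous fun M : Matrix (Fin n) (Fin n) ℝ => M i j :=
      (continuous_apply j).comp (continuous_apply i)
    have hcont : Continuous fun M : Matrix (Fin n) (Fin n) ℝ =>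
        |(M - (A:Matrix (Fin n) (Fin n) ℝ) - S) i j| := by
      simp only [Matrix.sub_apply]
      exact ((h1.sub continuous_const).sub continuous_const).abs
    exact isOpen_lt hcont continuous_const
  have hmem : A + S ∈ U := by
    intro i j
    rw [AddSubgroup.coe_add]
    simpa using hεpos
  have hsub : U ⊆ F := by
    intro x hx
    have hxval : ∀ i j, |((x : Matrix (Fin n) (Fin n) ℝ) - A - S) i j| < ε := hx
    set C : Matrix (Fin n) (Fin n) ℝ := (x : Matrix (Fin n) (Fin n) ℝ) - A - S with hC
    have habs : absSum C < c := by
      have hlt : absSum C < ∑ _i : Fin n, ∑ _j : Fin n, ε := by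
        refine Finset.sum_lt_sum_of_nonempty ?_ fun i _ => ?_
        · exact Finset.univ_nonempty_iff.mpr ⟨⟨0, hn⟩⟩
        · refine Finset.sum_lt_sum_of_nonempty ?_ fun j _ => hxval i j
          exact Finset.univ_nonempty_iff.mpr ⟨⟨0, hn⟩⟩
      have hsum : ∑ _i : Fin n, ∑ _j : Fin n, ε = (n:ℝ)^2 * ε := by
        simp [Finset.sum_const, sq]; ring
      rw [hsum, hε] at hlt
      calc absSum C < (n:ℝ)^2 * (c / (n:ℝ)^2) := hlt
        _ = c := by field_simp
    have hpsd : (x - A) ∈ PSD n := by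
      show ((x - A : SymMat n) : Matrix (Fin n) (Fin n) ℝ).PosSemidef
      rw [AddSubgroup.coe_sub]
      have heq : (x : Matrix (Fin n) (Fin n) ℝ) - A = (S : Matrix (Fin n) (Fin n) ℝ) + C := by
        rw [hC]; abel
      rw [heq]
      refine Matrix.posSemidef_iff_dotProduct_mulVec.mpr ⟨?_, fun v => ?_⟩
      · have := sub_herm x A
        rwa [heq] at this
      · simp only [star_trivial, Matrix.add_mulVec, dotProduct_add]
        have h1 := hcoer v
        have h2 := (abs_le.mp (quad_abs_le C v)).1
        have h3 : absSum C * (∑ k, v k ^ 2) ≤ c * (∑ k, v k ^ 2) :=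
          mul_le_mul_of_nonneg_right habs.le (sum_sq_nonneg v)
        linarith
    have : x = A + (x - A) := by abel
    rw [this]
    exact hF (Set.add_mem_add hA hpsd)
  exact interior_maximal hsub hUopen hmem

lemma reach_frontier {X : Type*} [TopologicalSpace X] [MetricSpace X]
    (H : Set X) : True := trivial

lemma reach_frontier' {X : Type*} [TopologicalSpace X] (H : Set X) (hcl : IsClosed H)
    (f : ℝ → X) (hf : Continuous f) (h0 : f 0 ∈ H)
    (hbdd : ∃ t₀, ∀ t, t₀ ≤ t → f t ∉ H) :
    ∃ t, 0 ≤ t ∧ f t ∈ frontier H := by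
  obtain ⟨t₀, ht₀⟩ := hbdd
  set T := f ⁻¹' H with hT
  have hTcl : IsClosed T := hcl.preimage hf
  have hTne : T.Nonempty := ⟨0, h0⟩
  have hTbdd : BddAbove T := ⟨t₀, fun t ht => by
    by_contra h
    exact ht₀ t (le_of_not_ge h) ht⟩
  have hmem : sSup T ∈ T := hTcl.csSup_mem hTne hTbdd
  set t := sSup T with htdef
  refine ⟨t, le_csSup hTbdd h0, ?_⟩
  rw [hcl.frontier_eq]
  refine ⟨hmem, fun hint => ?_⟩
  have hUopen : IsOpen (f ⁻¹' interior H) := isOpen_interior.preimage hf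
  obtain ⟨ε, hε, hball⟩ := Metric.isOpen_iff.mp hUopen t hint
  have hmem2 : t + ε/2 ∈ T := by
    have : t + ε/2 ∈ Metric.ball t ε := by
      rw [Metric.mem_ball, Real.dist_eq]
      rw [abs_of_nonneg (by linarith)]
      linarith
    show f (t + ε/2) ∈ H
    exact interior_subset (hball this)
  have := le_csSup hTbdd hmem2
  linarith

lemma continuous_line (A : SymMat n) (σ : ℝ) :
    Continuous fun t : ℝ => A + smI n (σ * t) := by
  apply continuous_induced_rng.mpr
  have : (Subtype.val ∘ fun t : ℝ => A + smI n (σ * t)) =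
      fun t : ℝ => (A : Matrix (Fin n) (Fin n) ℝ) + (σ * t) • 1 := rfl
  rw [this]
  exact continuous_const.add ((continuous_const.mul continuous_id).smul continuous_const)

end Stmt13Aux

open Stmt13Aux in
theorem stmt13 (n : ℕ) (E G : Set (SymMat n))
    (hEcl : IsClosed E) (hEpos : E + PSD n ⊆ E) (hEne : E.Nonempty) (hEproper : E ≠ Set.univ)
    (hGcl : IsClosed G) (hGpos : G + PSD n ⊆ G) (hGne : G.Nonempty) (hGproper : G ≠ Set.univ)
    (hbd : frontier E ⊆ frontier G) :
    E = G := by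
  rcases Nat.eq_zero_or_pos n with hn0 | hn
  · subst hn0
    exfalso
    obtain ⟨x, hx⟩ := hEne
    apply hEproper
    apply Set.eq_univ_of_forall
    intro y
    rwa [Subsingleton.elim y x]
  apply Set.Subset.antisymm
  · -- E ⊆ G
    intro A hA
    obtain ⟨B, hB⟩ := Set.ne_univ_iff_exists_notMem E |>.mp hEproper
    set f : ℝ → SymMat n := fun t => A + smI n ((-1) * t) with hfdef
    have hf : Continuous f := continuous_line A (-1)
    have h0 : f 0 ∈ E := by
      have : f 0 = A := by
        apply Subtype.ext
        show (A : Matrix (Fin n) (Fin n) ℝ) + ((-1) * (0:ℝ)) • 1 = A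
        simp
      rwa [this]
    have hbdd : ∃ t₀, ∀ t, t₀ ≤ t → f t ∉ E := by
      refine ⟨absSum ((B : Matrix (Fin n) (Fin n) ℝ) - (A : Matrix (Fin n) (Fin n) ℝ)), fun t ht hft => ?_⟩
      apply hB
      have hBsub : (B - f t) ∈ PSD n := by
        show ((B - f t : SymMat n) : Matrix (Fin n) (Fin n) ℝ).PosSemidef
        rw [AddSubgroup.coe_sub]
        have heq : (B : Matrix (Fin n) (Fin n) ℝ) - (f t : Matrix (Fin n) (Fin n) ℝ) =
            ((B : Matrix (Fin n) (Fin n) ℝ) - A) + t • 1 := by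
          show (B : Matrix (Fin n) (Fin n) ℝ) - ((A : Matrix (Fin n) (Fin n) ℝ) + ((-1)*t) • 1) =
            ((B : Matrix (Fin n) (Fin n) ℝ) - A) + t • 1
          rw [neg_one_mul, neg_smul]
          abel
        rw [heq]
        exact add_smul_one_posSemidef (sub_herm B A) ht
      have : B = f t + (B - f t) := by abel
      rw [this]
      exact hEpos (Set.add_mem_add hft hBsub)
    obtain ⟨t, ht0, htf⟩ := reach_frontier' E hEcl f hf h0 hbdd
    have hftG : f t ∈ G := by
      have := hbd htf
      exact hGcl.closure_eq ▸ frontier_subset_closure this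
    have hAeq : A = f t + smI n t := by
      apply Subtype.ext
      show (A : Matrix (Fin n) (Fin n) ℝ) =
        ((A : Matrix (Fin n) (Fin n) ℝ) + ((-1)*t) • 1) + t • 1
      rw [neg_one_mul, neg_smul]
      abel
    rw [hAeq]
    exact hGpos (Set.add_mem_add hftG (smI_mem_PSD ht0))
  · -- G ⊆ E
    intro A hA
    by_contra hAE
    obtain ⟨C, hC⟩ := hEne
    set f : ℝ → SymMat n := fun t => A + smI n (1 * t) with hfdef
    have hf : Continuous f := continuous_line A 1
    have hf_eq : ∀ t, f t = A + smI n t := by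
      intro t
      apply Subtype.ext
      show (A : Matrix (Fin n) (Fin n) ℝ) + ((1:ℝ)*t) • 1 =
        (A : Matrix (Fin n) (Fin n) ℝ) + t • 1
      rw [one_mul]
    have h0 : f 0 ∈ closure Eᶜ := by
      have : f 0 = A := by
        apply Subtype.ext
        show (A : Matrix (Fin n) (Fin n) ℝ) + ((1:ℝ)*(0:ℝ)) • 1 = A
        simp
      rw [this]
      exact subset_closure hAE
    have hbdd : ∃ t₀, ∀ t, t₀ ≤ t → f t ∉ closure Eᶜ := by
      refine ⟨absSum ((A : Matrix (Fin n) (Fin n) ℝ) - (C : Matrix (Fin n) (Fin n) ℝ)) + 1, fun t ht hft => ?_⟩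
      have hSpd : ((f t - C : SymMat n) : Matrix (Fin n) (Fin n) ℝ).PosDef := by
        rw [AddSubgroup.coe_sub]
        have heq : (f t : Matrix (Fin n) (Fin n) ℝ) - (C : Matrix (Fin n) (Fin n) ℝ) =
            ((A : Matrix (Fin n) (Fin n) ℝ) - C) + t • 1 := by
          show ((A : Matrix (Fin n) (Fin n) ℝ) + ((1:ℝ)*t) • 1) - C =
            ((A : Matrix (Fin n) (Fin n) ℝ) - C) + t • 1
          rw [one_mul]
          abel
        rw [heq]
        exact add_smul_one_posDef (sub_herm A C) (by linarith)
      have hint : C + (f t - C) ∈ interior E :=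
        mem_interior_of_posDef hn E hEpos hC hSpd
      have heq2 : C + (f t - C) = f t := by abel
      rw [heq2] at hint
      rw [closure_compl] at hft
      exact hft hint
    obtain ⟨t, ht0, htf⟩ := reach_frontier' (closure Eᶜ) isClosed_closure f hf h0 hbdd
    have htfE : f t ∈ frontier E := by
      rw [closure_compl, frontier_compl] at htf
      exact frontier_interior_subset htf
    rcases eq_or_lt_of_le ht0 with ht0' | htpos
    · -- t = 0 : A ∈ frontier E ⊆ E, contradiction
      apply hAE
      have : f t = A := by
        apply Subtype.ext
        show (A : Matrix (Fin n) (Fin n) ℝ) + ((1:ℝ)*t) • 1 = A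
        rw [← ht0']
        simp
      rw [this] at htfE
      exact hEcl.closure_eq ▸ frontier_subset_closure htfE
    · -- t > 0 : f t ∈ interior G contradicts f t ∈ frontier G
      have htfG : f t ∈ frontier G := hbd htfE
      have hint : f t ∈ interior G := by
        rw [hf_eq t]
        exact mem_interior_of_posDef hn G hGpos hA (smul_one_posDef htpos)
      rw [hGcl.frontier_eq] at htfG
      exact htfG.2 hint
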